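/- For every integer t ≥ 3, there exists a set of 2t+5 points in the plane that admits no t-tolerant partition into two parts; hence N(2,2,t) ≥ 2t+6. -/

import Mathlib

/-- Points of `ℝ^d`. -/
abbrev Pt (d : ℕ) := EuclideanSpace ℝ (Fin d)

noncomputable instance {d : ℕ} : DecidableEq (Pt d) := Classical.decEq _

/-- `Q` is a partition of the finite set `P` into `k` parts. -/
def IsPartition {d k : ℕ} (P : Finset (Pt d)) (Q : Fin k → Finset (Pt d)) : Prop :=
  (∀ i j : Fin k, i ≠ j → Disjoint (Q i) (Q j)) ∧ P = Finset.univ.biUnion Q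

/-- The partition `Q` of `P` is `t`-tolerant: after removing any set `Y` of at most `t`
points, the convex hulls of the parts still have a common point. -/
def IsTolerant {d k : ℕ} (t : ℕ) (P : Finset (Pt d)) (Q : Fin k → Finset (Pt d)) : Prop :=
  ∀ Y ⊆ P, Y.card ≤ t →
    (⋂ i : Fin k, convexHull ℝ ((Q i \ Y : Finset (Pt d)) : Set (Pt d))).Nonempty

/-- A two-part partition `A, B` of `P` is `t`-tolerant: after removing any set `Y` of at
most `t` points, the convex hulls of the two parts still intersect. -/
def IsTolerant2 {d : ℕ} (t : ℕ) (P A B : Finset (Pt d)) : Prop :=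
  ∀ Y ⊆ P, Y.card ≤ t →
    (convexHull ℝ ((A \ Y : Finset (Pt d)) : Set (Pt d)) ∩
      convexHull ℝ ((B \ Y : Finset (Pt d)) : Set (Pt d))).Nonempty

/-! ### Auxiliary setup: the witness configuration -/

noncomputable def vec (x y : ℝ) : Pt 2 := WithLp.toLp 2 ![x, y]
@[simp] lemma vec0 (x y : ℝ) : vec x y 0 = x := rfl
@[simp] lemma vec1 (x y : ℝ) : vec x y 1 = y := rfl
lemma vec_inj {a b c d : ℝ} (h : vec a b = vec c d) : a = c ∧ b = d :=
  ⟨congrArg (fun v : Pt 2 => v 0) h, congrArg (fun v : Pt 2 => v 1) h⟩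

noncomputable def pp (i : ℕ) : Pt 2 := vec i ((i:ℝ)^2)
noncomputable def qv (c : ℝ) : Pt 2 := vec c (c^2 + 3/8)

lemma pp_inj : Function.Injective pp := by
  intro a b h; exact_mod_cast (vec_inj h).1

lemma pp_ne_qv (i : ℕ) (c : ℝ) (h2 : ∀ k : ℕ, c ≠ k) : pp i ≠ qv c := by
  intro h; exact h2 i ((vec_inj h).1).symm

lemma c1ne : ∀ k : ℕ, (3/2 : ℝ) ≠ k := by
  intro k h
  have : (3:ℝ) = 2*k := by linarith
  have : (3:ℕ) = 2*k := by exact_mod_cast this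
  omega

lemma c2ne : ∀ k : ℕ, (7/2 : ℝ) ≠ k := by
  intro k h
  have : (7:ℝ) = 2*k := by linarith
  have : (7:ℕ) = 2*k := by exact_mod_cast this
  omega

lemma c3ne : ∀ k : ℕ, (11/2 : ℝ) ≠ k := by
  intro k h
  have : (11:ℝ) = 2*k := by linarith
  have : (11:ℕ) = 2*k := by exact_mod_cast this
  omega

noncomputable def Qs : Finset (Pt 2) := {qv (3/2), qv (7/2), qv (11/2)}

noncomputable def Sset (m : ℕ) : Finset (Pt 2) := (Finset.Icc 1 m).image pp ∪ Qs

lemma qv_inj {c c' : ℝ} (h : qv c = qv c') : c = c' := (vec_inj h).1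

lemma Qs_card : Qs.card = 3 := by
  rw [Qs]
  rw [Finset.card_insert_of_notMem, Finset.card_insert_of_notMem, Finset.card_singleton]
  · simp only [Finset.mem_singleton]
    intro h; have := qv_inj h; norm_num at this
  · simp only [Finset.mem_insert, Finset.mem_singleton]
    rintro (h | h) <;> (have := qv_inj h; norm_num at this)

lemma Sset_card (m : ℕ) : (Sset m).card = m + 3 := by
  rw [Sset, Finset.card_union_of_disjoint, Finset.card_image_of_injective _ pp_inj,
    Nat.card_Icc, Qs_card]
  · omega
  · rw [Finset.disjoint_left]
    rintro x hx hq
    simp only [Finset.mem_image] at hx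
    obtain ⟨i, _, rfl⟩ := hx
    simp only [Qs, Finset.mem_insert, Finset.mem_singleton] at hq
    rcases hq with h | h | h
    · exact pp_ne_qv i _ c1ne h
    · exact pp_ne_qv i _ c2ne h
    · exact pp_ne_qv i _ c3ne h

lemma mem_Sset {m : ℕ} {x : Pt 2} (hx : x ∈ Sset m) :
    (∃ i, 1 ≤ i ∧ i ≤ m ∧ x = pp i) ∨ x = qv (3/2) ∨ x = qv (7/2) ∨ x = qv (11/2) := by
  rw [Sset, Finset.mem_union] at hx
  rcases hx with h | h
  · simp only [Finset.mem_image, Finset.mem_Icc] at h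
    obtain ⟨i, ⟨h1, h2⟩, rfl⟩ := h
    exact Or.inl ⟨i, h1, h2, rfl⟩
  · simp only [Qs, Finset.mem_insert, Finset.mem_singleton] at h
    tauto

lemma pp_mem_Sset {m i : ℕ} (h1 : 1 ≤ i) (h2 : i ≤ m) : pp i ∈ Sset m := by
  exact Finset.mem_union_left _ (Finset.mem_image_of_mem _ (Finset.mem_Icc.mpr ⟨h1, h2⟩))

lemma qv_mem_Sset₁ (m : ℕ) : qv (3/2) ∈ Sset m :=
  Finset.mem_union_right _ (by simp [Qs])
lemma qv_mem_Sset₂ (m : ℕ) : qv (7/2) ∈ Sset m :=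
  Finset.mem_union_right _ (by simp [Qs])
lemma qv_mem_Sset₃ (m : ℕ) : qv (11/2) ∈ Sset m :=
  Finset.mem_union_right _ (by simp [Qs])

/-! ### Separation machinery -/

lemma lin_f (σ : ℝ) : IsLinearMap ℝ (fun x : Pt 2 => x 1 - σ * x 0) := by
  constructor
  · intro a b; simp [PiLp.add_apply]; ring
  · intro c a; simp [PiLp.smul_apply, smul_eq_mul]; ring

lemma tol_symm {t : ℕ} {S A B : Finset (Pt 2)} (h : IsTolerant2 t S A B) :
    IsTolerant2 t S B A := by
  intro Y hY hYc
  obtain ⟨z, hz⟩ := h Y hY hYc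
  exact ⟨z, hz.2, hz.1⟩

lemma sep_main {t : ℕ} {S A B : Finset (Pt 2)} (hAB : A ∪ B = S)
    (hT : IsTolerant2 t S A B) (In : Finset (Pt 2)) (σ τ : ℝ)
    (hin : ∀ x ∈ In, x 1 - σ * x 0 < τ)
    (hout : ∀ x ∈ S, x ∉ In → τ < x 1 - σ * x 0) :
    t + 1 ≤ (B ∩ In).card + (A \ In).card := by
  by_contra hcon
  push_neg at hcon
  set Y : Finset (Pt 2) := (B ∩ In) ∪ (A \ In) with hYdef
  have hYS : Y ⊆ S := by
    intro x hx
    rw [← hAB]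
    rcases Finset.mem_union.mp hx with h | h
    · exact Finset.mem_union_right _ (Finset.mem_of_mem_inter_left h)
    · exact Finset.mem_union_left _ (Finset.mem_sdiff.mp h).1
  have hYc : Y.card ≤ t := le_trans (Finset.card_union_le _ _) (by omega)
  obtain ⟨z, hz1, hz2⟩ := hT Y hYS hYc
  have hA' : ((A \ Y : Finset (Pt 2)) : Set (Pt 2)) ⊆ {w | w 1 - σ * w 0 < τ} := by
    intro x hx
    simp only [Finset.coe_sdiff, Set.mem_diff, Finset.mem_coe] at hx
    obtain ⟨hxA, hxY⟩ := hx
    have hxIn : x ∈ In := by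
      by_contra hni
      exact hxY (Finset.mem_union_right _ (Finset.mem_sdiff.mpr ⟨hxA, hni⟩))
    exact hin x hxIn
  have hB' : ((B \ Y : Finset (Pt 2)) : Set (Pt 2)) ⊆ {w | τ < w 1 - σ * w 0} := by
    intro x hx
    simp only [Finset.coe_sdiff, Set.mem_diff, Finset.mem_coe] at hx
    obtain ⟨hxB, hxY⟩ := hx
    have hxIn : x ∉ In := by
      intro hi
      exact hxY (Finset.mem_union_left _ (Finset.mem_inter.mpr ⟨hxB, hi⟩))
    exact hout x (by rw [← hAB]; exact Finset.mem_union_right _ hxB) hxIn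
  have h1 := convexHull_min hA' (convex_halfSpace_lt (lin_f σ) τ) hz1
  have h2 := convexHull_min hB' (convex_halfSpace_gt (lin_f σ) τ) hz2
  simp only [Set.mem_setOf_eq] at h1 h2
  linarith

/-- If both elements of a separable pair were in `B` (the part of size `t+2`),
removing the rest of `B` contradicts tolerance. -/
lemma pair_not_both {t : ℕ} {S A B : Finset (Pt 2)} (hAB : A ∪ B = S) (hd : Disjoint A B)
    (hBcard : B.card = t + 2) (hT : IsTolerant2 t S A B)
    (x y : Pt 2) (hxy : x ≠ y) (σ τ : ℝ)
    (hinx : x 1 - σ * x 0 < τ) (hiny : y 1 - σ * y 0 < τ)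
    (hout : ∀ z ∈ S, z ∉ ({x, y} : Finset (Pt 2)) → τ < z 1 - σ * z 0) :
    ¬(x ∈ B ∧ y ∈ B) := by
  rintro ⟨hxB, hyB⟩
  have hBA : B ∪ A = S := by rw [Finset.union_comm]; exact hAB
  have hin : ∀ z ∈ ({x, y} : Finset (Pt 2)), z 1 - σ * z 0 < τ := by
    intro z hz
    rcases Finset.mem_insert.mp hz with h | h
    · subst h; exact hinx
    · rw [Finset.mem_singleton] at h; subst h; exact hiny
  have hsep := sep_main hBA (tol_symm hT) {x, y} σ τ hin hout
  have hA0 : (A ∩ ({x, y} : Finset (Pt 2))).card = 0 := by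
    rw [Finset.card_eq_zero, Finset.eq_empty_iff_forall_notMem]
    intro z hz
    obtain ⟨hzA, hzxy⟩ := Finset.mem_inter.mp hz
    rcases Finset.mem_insert.mp hzxy with h | h
    · subst h; exact Finset.disjoint_left.mp hd hzA hxB
    · rw [Finset.mem_singleton] at h; subst h; exact Finset.disjoint_left.mp hd hzA hyB
  have hBin : (B ∩ ({x, y} : Finset (Pt 2))).card = 2 := by
    have hsub : ({x, y} : Finset (Pt 2)) ⊆ B := by
      intro z hz
      rcases Finset.mem_insert.mp hz with h | h
      · subst h; exact hxB
      · rw [Finset.mem_singleton] at h; subst h; exact hyB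
    rw [Finset.inter_eq_right.mpr hsub]
    rw [Finset.card_insert_of_notMem (by simp [hxy]), Finset.card_singleton]
  have hid := Finset.card_inter_add_card_sdiff B ({x, y} : Finset (Pt 2))
  omega

/-- A singleton separable point in `B` forces `B.card ≥ t+2`. -/
lemma single_forces {t : ℕ} {S A B : Finset (Pt 2)} (hAB : A ∪ B = S) (hd : Disjoint A B)
    (hT : IsTolerant2 t S A B) (x : Pt 2) (hxB : x ∈ B) (σ τ : ℝ)
    (hinx : x 1 - σ * x 0 < τ)
    (hout : ∀ z ∈ S, z ∉ ({x} : Finset (Pt 2)) → τ < z 1 - σ * z 0) :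
    t + 2 ≤ B.card := by
  have hBA : B ∪ A = S := by rw [Finset.union_comm]; exact hAB
  have hin : ∀ z ∈ ({x} : Finset (Pt 2)), z 1 - σ * z 0 < τ := by
    intro z hz; rw [Finset.mem_singleton] at hz; subst hz; exact hinx
  have hsep := sep_main hBA (tol_symm hT) {x} σ τ hin hout
  have hA0 : (A ∩ ({x} : Finset (Pt 2))).card = 0 := by
    rw [Finset.card_eq_zero, Finset.eq_empty_iff_forall_notMem]
    intro z hz
    obtain ⟨hzA, hzx⟩ := Finset.mem_inter.mp hz
    rw [Finset.mem_singleton] at hzx; subst hzx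
    exact Finset.disjoint_left.mp hd hzA hxB
  have hBin : (B ∩ ({x} : Finset (Pt 2))).card = 1 := by
    rw [Finset.inter_eq_right.mpr (by simpa using hxB), Finset.card_singleton]
  have hid := Finset.card_inter_add_card_sdiff B ({x} : Finset (Pt 2))
  omega

/-! ### Numeric helpers -/

lemma nat_gap {m i : ℕ} (h : m ≠ i) : 1 ≤ ((m:ℝ) - i)^2 := by
  rcases Nat.lt_or_ge m i with h' | h'
  · have : (m:ℝ) + 1 ≤ i := by exact_mod_cast h'
    nlinarith
  · have h'' : i < m := lt_of_le_of_ne h' (Ne.symm h)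
    have : (i:ℝ) + 1 ≤ m := by exact_mod_cast h''
    nlinarith

lemma half_gap (k i : ℕ) : 1/4 ≤ ((2*(k:ℝ)+3)/2 - i)^2 := by
  rcases le_or_gt i (k+1) with h | h
  · have : (i:ℝ) ≤ (k:ℝ)+1 := by exact_mod_cast h
    nlinarith
  · have : (k:ℝ)+2 ≤ i := by exact_mod_cast h
    nlinarith

/-! ### The singleton cut -/

lemma hout_single (t i : ℕ) :
    ∀ z ∈ Sset (2*t+2), z ∉ ({pp i} : Finset (Pt 2)) →
      -(i:ℝ)^2 + 1/2 < z 1 - (2*(i:ℝ)) * z 0 := by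
  intro z hz hnot
  rcases mem_Sset hz with ⟨m, _, _, rfl⟩ | rfl | rfl | rfl
  · have hmi : m ≠ i := by
      intro h; subst h; exact hnot (Finset.mem_singleton_self _)
    have := nat_gap hmi
    simp only [pp, vec0, vec1]
    nlinarith
  · have := half_gap 0 i
    simp only [qv, vec0, vec1]
    nlinarith
  · have := half_gap 2 i
    simp only [qv, vec0, vec1]
    push_cast at this
    nlinarith
  · have := half_gap 4 i
    simp only [qv, vec0, vec1]
    push_cast at this
    nlinarith

lemma hin_single (i : ℕ) : (pp i) 1 - (2*(i:ℝ)) * (pp i) 0 < -(i:ℝ)^2 + 1/2 := by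
  simp only [pp, vec0, vec1]; nlinarith

/-! ### The adjacent-pair cuts -/

lemma hin_adj (a : ℕ) :
    (pp a) 1 - (2*(a:ℝ)+1) * (pp a) 0 < -(a:ℝ)^2 - a + 1/16 ∧
    (pp (a+1)) 1 - (2*(a:ℝ)+1) * (pp (a+1)) 0 < -(a:ℝ)^2 - a + 1/16 := by
  constructor <;> (simp only [pp, vec0, vec1]; push_cast; nlinarith)

lemma hout_adj (t a : ℕ) :
    ∀ z ∈ Sset (2*t+2), z ∉ ({pp a, pp (a+1)} : Finset (Pt 2)) →
      -(a:ℝ)^2 - a + 1/16 < z 1 - (2*(a:ℝ)+1) * z 0 := by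
  intro z hz hnot
  rcases mem_Sset hz with ⟨m, _, _, rfl⟩ | rfl | rfl | rfl
  · have hm1 : m ≠ a := by
      intro h; subst h; exact hnot (Finset.mem_insert_self _ _)
    have hm2 : m ≠ a + 1 := by
      intro h; subst h
      exact hnot (Finset.mem_insert_of_mem (Finset.mem_singleton_self _))
    simp only [pp, vec0, vec1]
    rcases Nat.lt_or_ge m a with h' | h'
    · have : (m:ℝ) + 1 ≤ a := by exact_mod_cast h'
      nlinarith
    · have h'' : a + 2 ≤ m := by omega
      have : (a:ℝ) + 2 ≤ m := by exact_mod_cast h''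
      nlinarith
  · simp only [qv, vec0, vec1]
    nlinarith [sq_nonneg ((3:ℝ)/2 - a - 1/2)]
  · simp only [qv, vec0, vec1]
    nlinarith [sq_nonneg ((7:ℝ)/2 - a - 1/2)]
  · simp only [qv, vec0, vec1]
    nlinarith [sq_nonneg ((11:ℝ)/2 - a - 1/2)]
/-! ### Value computations -/

lemma fval_pp (σ : ℝ) (i : ℕ) : (pp i) 1 - σ * (pp i) 0 = (i:ℝ)^2 - σ*i := by
  simp [pp]
lemma fval_qv (σ c : ℝ) : (qv c) 1 - σ * (qv c) 0 = c^2 + 3/8 - σ*c := by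
  simp [qv]

/-! ### The six q-pair cuts : hout lemmas -/

lemma hout_q1a (t : ℕ) :
    ∀ z ∈ Sset (2*t+2), z ∉ ({pp 1, qv (3/2)} : Finset (Pt 2)) →
      (-9/10 : ℝ) < z 1 - (12/5) * z 0 := by
  intro z hz hnot
  rcases mem_Sset hz with ⟨m, hm1, _, rfl⟩ | rfl | rfl | rfl
  · have hm : m ≠ 1 := fun h => hnot (by rw [h]; exact Finset.mem_insert_self _ _)
    have h2 : 2 ≤ m := by omega
    have h2' : (2:ℝ) ≤ m := by exact_mod_cast h2
    rw [fval_pp]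
    nlinarith [mul_nonneg (show (0:ℝ) ≤ (m:ℝ) - 2 by linarith)
      (show (0:ℝ) ≤ (m:ℝ) - 2/5 by linarith)]
  · exact absurd (Finset.mem_insert_of_mem (Finset.mem_singleton_self _)) hnot
  · rw [fval_qv]; norm_num
  · rw [fval_qv]; norm_num

lemma hout_q1b (t : ℕ) :
    ∀ z ∈ Sset (2*t+2), z ∉ ({pp 2, qv (3/2)} : Finset (Pt 2)) →
      (-27/10 : ℝ) < z 1 - (18/5) * z 0 := by
  intro z hz hnot
  rcases mem_Sset hz with ⟨m, hm1, _, rfl⟩ | rfl | rfl | rfl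
  · have hm : m ≠ 2 := fun h => hnot (by rw [h]; exact Finset.mem_insert_self _ _)
    rw [fval_pp]
    rcases le_or_gt m 1 with h | h
    · have : m = 1 := by omega
      subst this; norm_num
    · have h3 : 3 ≤ m := by omega
      have h3' : (3:ℝ) ≤ m := by exact_mod_cast h3
      nlinarith [mul_nonneg (show (0:ℝ) ≤ (m:ℝ) - 3 by linarith)
        (show (0:ℝ) ≤ (m:ℝ) - 3/5 by linarith)]
  · exact absurd (Finset.mem_insert_of_mem (Finset.mem_singleton_self _)) hnot
  · rw [fval_qv]; norm_num
  · rw [fval_qv]; norm_num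

lemma hout_q2a (t : ℕ) :
    ∀ z ∈ Sset (2*t+2), z ∉ ({pp 3, qv (7/2)} : Finset (Pt 2)) →
      (-97/10 : ℝ) < z 1 - (32/5) * z 0 := by
  intro z hz hnot
  rcases mem_Sset hz with ⟨m, hm1, _, rfl⟩ | rfl | rfl | rfl
  · have hm : m ≠ 3 := fun h => hnot (by rw [h]; exact Finset.mem_insert_self _ _)
    rw [fval_pp]
    rcases le_or_gt m 2 with h | h
    · have h' : (m:ℝ) ≤ 2 := by exact_mod_cast h
      nlinarith [mul_nonneg (show (0:ℝ) ≤ 2 - (m:ℝ) by linarith)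
        (show (0:ℝ) ≤ 22/5 - (m:ℝ) by linarith)]
    · have h4 : 4 ≤ m := by omega
      have h4' : (4:ℝ) ≤ m := by exact_mod_cast h4
      nlinarith [mul_nonneg (show (0:ℝ) ≤ (m:ℝ) - 4 by linarith)
        (show (0:ℝ) ≤ (m:ℝ) - 12/5 by linarith)]
  · rw [fval_qv]; norm_num
  · exact absurd (Finset.mem_insert_of_mem (Finset.mem_singleton_self _)) hnot
  · rw [fval_qv]; norm_num

lemma hout_q2b (t : ℕ) :
    ∀ z ∈ Sset (2*t+2), z ∉ ({pp 4, qv (7/2)} : Finset (Pt 2)) →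
      (-139/10 : ℝ) < z 1 - (38/5) * z 0 := by
  intro z hz hnot
  rcases mem_Sset hz with ⟨m, hm1, _, rfl⟩ | rfl | rfl | rfl
  · have hm : m ≠ 4 := fun h => hnot (by rw [h]; exact Finset.mem_insert_self _ _)
    rw [fval_pp]
    rcases le_or_gt m 3 with h | h
    · have h' : (m:ℝ) ≤ 3 := by exact_mod_cast h
      nlinarith [mul_nonneg (show (0:ℝ) ≤ 3 - (m:ℝ) by linarith)
        (show (0:ℝ) ≤ 23/5 - (m:ℝ) by linarith)]
    · have h5 : 5 ≤ m := by omega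
      have h5' : (5:ℝ) ≤ m := by exact_mod_cast h5
      nlinarith [mul_nonneg (show (0:ℝ) ≤ (m:ℝ) - 5 by linarith)
        (show (0:ℝ) ≤ (m:ℝ) - 13/5 by linarith)]
  · rw [fval_qv]; norm_num
  · exact absurd (Finset.mem_insert_of_mem (Finset.mem_singleton_self _)) hnot
  · rw [fval_qv]; norm_num

lemma hout_q3a (t : ℕ) :
    ∀ z ∈ Sset (2*t+2), z ∉ ({pp 5, qv (11/2)} : Finset (Pt 2)) →
      (-53/2 : ℝ) < z 1 - (52/5) * z 0 := by
  intro z hz hnot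
  rcases mem_Sset hz with ⟨m, hm1, _, rfl⟩ | rfl | rfl | rfl
  · have hm : m ≠ 5 := fun h => hnot (by rw [h]; exact Finset.mem_insert_self _ _)
    rw [fval_pp]
    rcases le_or_gt m 4 with h | h
    · have h' : (m:ℝ) ≤ 4 := by exact_mod_cast h
      nlinarith [mul_nonneg (show (0:ℝ) ≤ 4 - (m:ℝ) by linarith)
        (show (0:ℝ) ≤ 32/5 - (m:ℝ) by linarith)]
    · have h6 : 6 ≤ m := by omega
      have h6' : (6:ℝ) ≤ m := by exact_mod_cast h6
      nlinarith [mul_nonneg (show (0:ℝ) ≤ (m:ℝ) - 6 by linarith)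
        (show (0:ℝ) ≤ (m:ℝ) - 22/5 by linarith)]
  · rw [fval_qv]; norm_num
  · rw [fval_qv]; norm_num
  · exact absurd (Finset.mem_insert_of_mem (Finset.mem_singleton_self _)) hnot

lemma hout_q3b (t : ℕ) :
    ∀ z ∈ Sset (2*t+2), z ∉ ({pp 6, qv (11/2)} : Finset (Pt 2)) →
      (-331/10 : ℝ) < z 1 - (58/5) * z 0 := by
  intro z hz hnot
  rcases mem_Sset hz with ⟨m, hm1, _, rfl⟩ | rfl | rfl | rfl
  · have hm : m ≠ 6 := fun h => hnot (by rw [h]; exact Finset.mem_insert_self _ _)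
    rw [fval_pp]
    rcases le_or_gt m 5 with h | h
    · have h' : (m:ℝ) ≤ 5 := by exact_mod_cast h
      nlinarith [mul_nonneg (show (0:ℝ) ≤ 5 - (m:ℝ) by linarith)
        (show (0:ℝ) ≤ 33/5 - (m:ℝ) by linarith)]
    · have h7 : 7 ≤ m := by omega
      have h7' : (7:ℝ) ≤ m := by exact_mod_cast h7
      nlinarith [mul_nonneg (show (0:ℝ) ≤ (m:ℝ) - 7 by linarith)
        (show (0:ℝ) ≤ (m:ℝ) - 23/5 by linarith)]
  · rw [fval_qv]; norm_num
  · rw [fval_qv]; norm_num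
  · exact absurd (Finset.mem_insert_of_mem (Finset.mem_singleton_self _)) hnot

/-! ### The prefix cut `Sset 6` -/

lemma hin_six : ∀ x ∈ Sset 6, x 1 - (7:ℝ) * x 0 < -3 := by
  intro x hx
  rcases mem_Sset hx with ⟨i, hi1, hi6, rfl⟩ | rfl | rfl | rfl
  · rw [fval_pp]
    have h1 : (1:ℝ) ≤ i := by exact_mod_cast hi1
    have h6 : (i:ℝ) ≤ 6 := by exact_mod_cast hi6
    nlinarith [mul_nonneg (show (0:ℝ) ≤ (i:ℝ) - 1 by linarith)
      (show (0:ℝ) ≤ 6 - (i:ℝ) by linarith)]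
  · rw [fval_qv]; norm_num
  · rw [fval_qv]; norm_num
  · rw [fval_qv]; norm_num

lemma hout_six (t : ℕ) :
    ∀ z ∈ Sset (2*t+2), z ∉ Sset 6 → (-3:ℝ) < z 1 - (7:ℝ) * z 0 := by
  intro z hz hnot
  rcases mem_Sset hz with ⟨m, hm1, _, rfl⟩ | rfl | rfl | rfl
  · have hm : 7 ≤ m := by
      by_contra h
      exact hnot (pp_mem_Sset hm1 (by omega))
    have hm' : (7:ℝ) ≤ m := by exact_mod_cast hm
    rw [fval_pp]
    nlinarith
  · exact absurd (qv_mem_Sset₁ 6) hnot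
  · exact absurd (qv_mem_Sset₂ 6) hnot
  · exact absurd (qv_mem_Sset₃ 6) hnot

/-! ### The core contradiction for sizes (t+3, t+2) -/

lemma pp_ne {i j : ℕ} (h : i ≠ j) : pp i ≠ pp j := fun he => h (pp_inj he)

lemma core {t : ℕ} (ht : 3 ≤ t) {A B : Finset (Pt 2)}
    (hAB : A ∪ B = Sset (2*t+2)) (hd : Disjoint A B)
    (hAcard : A.card = t + 3) (hBcard : B.card = t + 2)
    (hT : IsTolerant2 t (Sset (2*t+2)) A B) : False := by
  -- adjacent-pair constraints within the three groups
  have nb_adj : ∀ a b : ℕ, b = a + 1 → ¬(pp a ∈ B ∧ pp b ∈ B) := by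
    intro a b hb
    subst hb
    exact pair_not_both hAB hd hBcard hT (pp a) (pp (a+1)) (pp_ne (by omega)) _ _
      (hin_adj a).1 (hin_adj a).2 (hout_adj t a)
  have nb12 : ¬(pp 1 ∈ B ∧ pp 2 ∈ B) := nb_adj 1 2 rfl
  have nb34 : ¬(pp 3 ∈ B ∧ pp 4 ∈ B) := nb_adj 3 4 rfl
  have nb56 : ¬(pp 5 ∈ B ∧ pp 6 ∈ B) := nb_adj 5 6 rfl
  -- q-pair constraints
  have nb1q : ¬(pp 1 ∈ B ∧ qv (3/2) ∈ B) :=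
    pair_not_both hAB hd hBcard hT (pp 1) (qv (3/2)) (pp_ne_qv 1 _ c1ne) (12/5) (-9/10)
      (by rw [fval_pp]; norm_num) (by rw [fval_qv]; norm_num) (hout_q1a t)
  have nb2q : ¬(pp 2 ∈ B ∧ qv (3/2) ∈ B) :=
    pair_not_both hAB hd hBcard hT (pp 2) (qv (3/2)) (pp_ne_qv 2 _ c1ne) (18/5) (-27/10)
      (by rw [fval_pp]; norm_num) (by rw [fval_qv]; norm_num) (hout_q1b t)
  have nb3q : ¬(pp 3 ∈ B ∧ qv (7/2) ∈ B) :=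
    pair_not_both hAB hd hBcard hT (pp 3) (qv (7/2)) (pp_ne_qv 3 _ c2ne) (32/5) (-97/10)
      (by rw [fval_pp]; norm_num) (by rw [fval_qv]; norm_num) (hout_q2a t)
  have nb4q : ¬(pp 4 ∈ B ∧ qv (7/2) ∈ B) :=
    pair_not_both hAB hd hBcard hT (pp 4) (qv (7/2)) (pp_ne_qv 4 _ c2ne) (38/5) (-139/10)
      (by rw [fval_pp]; norm_num) (by rw [fval_qv]; norm_num) (hout_q2b t)
  have nb5q : ¬(pp 5 ∈ B ∧ qv (11/2) ∈ B) :=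
    pair_not_both hAB hd hBcard hT (pp 5) (qv (11/2)) (pp_ne_qv 5 _ c3ne) (52/5) (-53/2)
      (by rw [fval_pp]; norm_num) (by rw [fval_qv]; norm_num) (hout_q3a t)
  have nb6q : ¬(pp 6 ∈ B ∧ qv (11/2) ∈ B) :=
    pair_not_both hAB hd hBcard hT (pp 6) (qv (11/2)) (pp_ne_qv 6 _ c3ne) (58/5) (-331/10)
      (by rw [fval_pp]; norm_num) (by rw [fval_qv]; norm_num) (hout_q3b t)
  -- group bounds
  have group_bound : ∀ (x y z : Pt 2), ¬(x ∈ B ∧ y ∈ B) → ¬(x ∈ B ∧ z ∈ B) →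
      ¬(y ∈ B ∧ z ∈ B) → (B ∩ ({x, y, z} : Finset (Pt 2))).card ≤ 1 := by
    intro x y z hxy hxz hyz
    by_contra hc
    push_neg at hc
    obtain ⟨a, ha, b, hb, hab⟩ := Finset.one_lt_card.mp hc
    obtain ⟨haB, haG⟩ := Finset.mem_inter.mp ha
    obtain ⟨hbB, hbG⟩ := Finset.mem_inter.mp hb
    simp only [Finset.mem_insert, Finset.mem_singleton] at haG hbG
    rcases haG with rfl | rfl | rfl <;> rcases hbG with rfl | rfl | rfl
    · exact hab rfl
    · exact hxy ⟨haB, hbB⟩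
    · exact hxz ⟨haB, hbB⟩
    · exact hxy ⟨hbB, haB⟩
    · exact hab rfl
    · exact hyz ⟨haB, hbB⟩
    · exact hxz ⟨hbB, haB⟩
    · exact hyz ⟨hbB, haB⟩
    · exact hab rfl
  have hG1 := group_bound (pp 1) (pp 2) (qv (3/2)) nb12 nb1q nb2q
  have hG2 := group_bound (pp 3) (pp 4) (qv (7/2)) nb34 nb3q nb4q
  have hG3 := group_bound (pp 5) (pp 6) (qv (11/2)) nb56 nb5q nb6q
  -- the prefix cut gives ≥ 4 points of B among the nine
  have hsub : Sset 6 ⊆ Sset (2*t+2) := by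
    rw [Sset, Sset]
    exact Finset.union_subset_union
      (Finset.image_subset_image (Finset.Icc_subset_Icc le_rfl (by omega))) le_rfl
  have hsep6 := sep_main hAB hT (Sset 6) 7 (-3) hin_six (hout_six t)
  have hid : (A ∩ Sset 6).card + (A \ Sset 6).card = A.card :=
    Finset.card_inter_add_card_sdiff A (Sset 6)
  have hpart : (A ∩ Sset 6).card + (B ∩ Sset 6).card = 9 := by
    have hdisj' : Disjoint (A ∩ Sset 6) (B ∩ Sset 6) :=
      hd.mono Finset.inter_subset_left Finset.inter_subset_left
    have hun : (A ∩ Sset 6) ∪ (B ∩ Sset 6) = Sset 6 := by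
      rw [← Finset.union_inter_distrib_right, hAB, Finset.inter_eq_right.mpr hsub]
    have := Finset.card_union_of_disjoint hdisj'
    rw [hun, Sset_card] at this
    omega
  have hB4 : 4 ≤ (B ∩ Sset 6).card := by omega
  -- but B meets the union of the three groups in at most 3 points
  have hcover : B ∩ Sset 6 ⊆
      (B ∩ ({pp 1, pp 2, qv (3/2)} : Finset (Pt 2))) ∪
      (B ∩ ({pp 3, pp 4, qv (7/2)} : Finset (Pt 2))) ∪
      (B ∩ ({pp 5, pp 6, qv (11/2)} : Finset (Pt 2))) := by
    intro x hx
    obtain ⟨hxB, hx6⟩ := Finset.mem_inter.mp hx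
    simp only [Finset.mem_union, Finset.mem_inter, Finset.mem_insert, Finset.mem_singleton]
    rcases mem_Sset hx6 with ⟨i, hi1, hi6, rfl⟩ | rfl | rfl | rfl
    · interval_cases i
      · exact Or.inl (Or.inl ⟨hxB, Or.inl rfl⟩)
      · exact Or.inl (Or.inl ⟨hxB, Or.inr (Or.inl rfl)⟩)
      · exact Or.inl (Or.inr ⟨hxB, Or.inl rfl⟩)
      · exact Or.inl (Or.inr ⟨hxB, Or.inr (Or.inl rfl)⟩)
      · exact Or.inr ⟨hxB, Or.inl rfl⟩
      · exact Or.inr ⟨hxB, Or.inr (Or.inl rfl)⟩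
    · exact Or.inl (Or.inl ⟨hxB, Or.inr (Or.inr rfl)⟩)
    · exact Or.inl (Or.inr ⟨hxB, Or.inr (Or.inr rfl)⟩)
    · exact Or.inr ⟨hxB, Or.inr (Or.inr rfl)⟩
  have hle := Finset.card_le_card hcover
  have hle2 := Finset.card_union_le
    ((B ∩ ({pp 1, pp 2, qv (3/2)} : Finset (Pt 2))) ∪
      (B ∩ ({pp 3, pp 4, qv (7/2)} : Finset (Pt 2))))
    (B ∩ ({pp 5, pp 6, qv (11/2)} : Finset (Pt 2)))
  have hle3 := Finset.card_union_le
    (B ∩ ({pp 1, pp 2, qv (3/2)} : Finset (Pt 2)))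
    (B ∩ ({pp 3, pp 4, qv (7/2)} : Finset (Pt 2)))
  omega

/-! ### Main theorem -/

theorem lower_bound_N22t (t : ℕ) (ht : 3 ≤ t) :
    ∃ S : Finset (Pt 2), S.card = 2 * t + 5 ∧
      ∀ A B : Finset (Pt 2), A ∪ B = S → Disjoint A B → ¬ IsTolerant2 t S A B := by
  refine ⟨Sset (2*t+2), by have := Sset_card (2*t+2); omega, ?_⟩
  intro A B hU hd hT
  have hAS : A ⊆ Sset (2*t+2) := hU ▸ Finset.subset_union_left
  have hBS : B ⊆ Sset (2*t+2) := hU ▸ Finset.subset_union_right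
  have hcards : A.card + B.card = 2*t+5 := by
    have := Finset.card_union_of_disjoint hd
    rw [hU, Sset_card] at this
    omega
  -- both parts have at least t+1 points
  have hA1 : t + 1 ≤ A.card := by
    by_contra h
    push_neg at h
    obtain ⟨z, hz1, _⟩ := hT A hAS (by omega)
    rw [Finset.sdiff_self] at hz1
    simp at hz1
  have hB1 : t + 1 ≤ B.card := by
    by_contra h
    push_neg at h
    obtain ⟨z, _, hz2⟩ := hT B hBS (by omega)
    rw [Finset.sdiff_self] at hz2
    simp at hz2
  -- both parts contain a parabola point
  have hppB : ∃ i, pp i ∈ B := by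
    by_contra h
    push_neg at h
    have hsub : (Finset.Icc 1 (2*t+2)).image pp ⊆ A := by
      intro x hx
      obtain ⟨i, _, rfl⟩ := Finset.mem_image.mp hx
      have hxS : pp i ∈ Sset (2*t+2) := Finset.mem_union_left _ hx
      rw [← hU] at hxS
      rcases Finset.mem_union.mp hxS with hA | hB
      · exact hA
      · exact absurd hB (h i)
    have := Finset.card_le_card hsub
    rw [Finset.card_image_of_injective _ pp_inj, Nat.card_Icc] at this
    omega
  have hppA : ∃ i, pp i ∈ A := by
    by_contra h
    push_neg at h
    have hsub : (Finset.Icc 1 (2*t+2)).image pp ⊆ B := by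
      intro x hx
      obtain ⟨i, _, rfl⟩ := Finset.mem_image.mp hx
      have hxS : pp i ∈ Sset (2*t+2) := Finset.mem_union_left _ hx
      rw [← hU] at hxS
      rcases Finset.mem_union.mp hxS with hA | hB
      · exact absurd hA (h i)
      · exact hB
    have := Finset.card_le_card hsub
    rw [Finset.card_image_of_injective _ pp_inj, Nat.card_Icc] at this
    omega
  -- hence both parts have at least t+2 points
  have hB2 : t + 2 ≤ B.card := by
    obtain ⟨i, hiB⟩ := hppB
    exact single_forces hU hd hT (pp i) hiB (2*(i:ℝ)) (-(i:ℝ)^2 + 1/2)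
      (hin_single i) (hout_single t i)
  have hA2 : t + 2 ≤ A.card := by
    obtain ⟨i, hiA⟩ := hppA
    exact single_forces (by rw [Finset.union_comm]; exact hU) hd.symm (tol_symm hT)
      (pp i) hiA (2*(i:ℝ)) (-(i:ℝ)^2 + 1/2) (hin_single i) (hout_single t i)
  -- conclude via the core lemma
  rcases (show A.card = t + 3 ∧ B.card = t + 2 ∨ A.card = t + 2 ∧ B.card = t + 3 by omega)
    with ⟨hA3, hB3⟩ | ⟨hA3, hB3⟩
  · exact core ht hU hd hA3 hB3 hT
  · exact core ht (by rw [Finset.union_comm]; exact hU) hd.symm hB3 hA3 (tol_symm hT)
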